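/- In a partial cube G contained in the class S4 (the bipartite graphs whose geodesic convexity satisfies the S4 separation property), the convex hull of every isometric cycle is gated. -/

import Mathlib

/-- The hypercube graph on `Λ → Bool`: two vertices are adjacent iff they differ
in exactly one coordinate. -/
def Qcube (Λ : Type*) : SimpleGraph (Λ → Bool) where
  Adj x y := ∃ f, x f ≠ y f ∧ ∀ g, g ≠ f → x g = y g
  symm := by
    constructor
    rintro x y ⟨f, hf, h⟩
    exact ⟨f, Ne.symm hf, fun g hg => (h g hg).symm⟩
  loopless := by
    constructor
    rintro x ⟨f, hf, _⟩
    exact hf rfl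

variable {Λ : Type*}

/-- The graph induced by the hypercube on a set `V` of vertices. -/
def pcGraph (V : Set (Λ → Bool)) : SimpleGraph V := (Qcube Λ).induce V

/-- `V` determines a partial cube: the induced graph is connected and its
graph distance coincides with the Hamming distance. -/
def IsPartialCube (V : Set (Λ → Bool)) : Prop :=
  (pcGraph V).Connected ∧
    ∀ x y : V, (pcGraph V).dist x y = Set.ncard {f | (x : Λ → Bool) f ≠ (y : Λ → Bool) f}

/-- `W` is a convex subgraph of the partial cube on `V`. -/
def ConvexIn (V W : Set (Λ → Bool)) : Prop :=
  W ⊆ V ∧ ∀ u v w : V, (u : Λ → Bool) ∈ W → (v : Λ → Bool) ∈ W →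
    (pcGraph V).dist u w + (pcGraph V).dist w v = (pcGraph V).dist u v →
      (w : Λ → Bool) ∈ W

/-- `W` is a gated subgraph of the partial cube on `V`: every vertex has a gate in `W`. -/
def GatedIn (V W : Set (Λ → Bool)) : Prop :=
  W ⊆ V ∧ ∀ x : V, ∃ g : V, (g : Λ → Bool) ∈ W ∧
    ∀ y : V, (y : Λ → Bool) ∈ W →
      (pcGraph V).dist x y = (pcGraph V).dist x g + (pcGraph V).dist g y

/-- The convex hull of a set `A` inside the partial cube on `V`. -/
def convexHullIn (V A : Set (Λ → Bool)) : Set (Λ → Bool) :=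
  ⋂₀ {W | ConvexIn V W ∧ A ⊆ W}

/-- The gated hull of a set `A` inside the partial cube on `V`. -/
def gatedHullIn (V A : Set (Λ → Bool)) : Set (Λ → Bool) :=
  ⋂₀ {W | GatedIn V W ∧ A ⊆ W}

/-- The interval between `u` and `v` in the partial cube on `V`. -/
def intervalIn (V : Set (Λ → Bool)) (u v : V) : Set V :=
  {w | (pcGraph V).dist u w + (pcGraph V).dist w v = (pcGraph V).dist u v}

/-- Contraction of the Θ-class of coordinate `f`: delete coordinate `f`. -/
def contr (f : Λ) (x : Λ → Bool) : {g : Λ // g ≠ f} → Bool := fun g => x g.1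

/-- Contraction of a whole set of coordinates `B`. -/
def proj (B : Set Λ) (x : Λ → Bool) : {g : Λ // g ∉ B} → Bool := fun g => x g.1

/-- The Θ-class `E_f` crosses `S`: `S` meets both halfspaces of coordinate `f`. -/
def Crosses (f : Λ) (S : Set (Λ → Bool)) : Prop :=
  (∃ x ∈ S, x f = true) ∧ (∃ x ∈ S, x f = false)

/-- The Θ-class `E_f` (of edges of the graph on `V`) is disjoint from `S`:
no edge in class `f` has an endpoint in `S`. -/
def DisjointFrom (f : Λ) (V S : Set (Λ → Bool)) : Prop :=
  ∀ x ∈ V, ∀ y ∈ V, (Qcube Λ).Adj x y → x f ≠ y f → x ∉ S ∧ y ∉ S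

/-- Adjacency in a cycle on `ZMod n` (for `n = 2` this is `K₂`). -/
def cycleAdj (n : ℕ) (x y : ZMod n) : Prop := x ≠ y ∧ (y = x + 1 ∨ x = y + 1)

/-- The cycle graph on `ZMod n`. -/
def cycGraph (n : ℕ) : SimpleGraph (ZMod n) where
  Adj x y := cycleAdj n x y
  symm := by
    constructor
    rintro x y ⟨h1, h2⟩
    exact ⟨Ne.symm h1, h2.symm⟩
  loopless := by
    constructor
    rintro x ⟨h1, _⟩
    exact h1 rfl

/-- The Cartesian product of the cycles/edges `ZMod (F i)`. -/
def edgeCycleProd {m : ℕ} (F : Fin m → ℕ) : SimpleGraph (∀ i, ZMod (F i)) where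
  Adj x y := ∃ i, cycleAdj (F i) (x i) (y i) ∧ ∀ j, j ≠ i → x j = y j
  symm := by
    constructor
    rintro x y ⟨i, ⟨h1, h2⟩, h3⟩
    exact ⟨i, ⟨Ne.symm h1, h2.symm⟩, fun j hj => (h3 j hj).symm⟩
  loopless := by
    constructor
    rintro x ⟨i, ⟨h1, _⟩, _⟩
    exact h1 rfl

/-- A graph is (isomorphic to) a Cartesian product of edges and even cycles. -/
def IsEdgeCycleProduct {α : Type*} (H : SimpleGraph α) : Prop :=
  ∃ (m : ℕ) (F : Fin m → ℕ), (∀ i, Even (F i) ∧ 2 ≤ F i) ∧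
    Nonempty (H ≃g edgeCycleProd F)

/-- The vertex set of `Q₃⁻`, the 3-cube minus one vertex. -/
def Q3minusSet : Set (Fin 3 → Bool) := {x : Fin 3 → Bool | x ≠ fun _ => true}

/-- A partial cube is hypercellular if no pc-minor of it (a contraction of a
convex subgraph, i.e. of a restriction) is isomorphic to `Q₃⁻`. -/
def Hypercellular (V : Set (Λ → Bool)) : Prop :=
  IsPartialCube V ∧ ∀ (B : Set Λ) (W : Set (Λ → Bool)), ConvexIn V W →
    IsEmpty (pcGraph (proj B '' W) ≃g pcGraph Q3minusSet)

/-- A cell of the partial cube on `V`: a convex subgraph isomorphic to a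
Cartesian product of edges and even cycles. -/
def IsCellIn (V X : Set (Λ → Bool)) : Prop :=
  ConvexIn V X ∧ IsEdgeCycleProduct (pcGraph X)

/-- The Pasch axiom, equivalent to the `S₄` separation property for bipartite
graphs: for `x ∈ I(u,v)` and `y ∈ I(u,w)`, the intervals `I(v,y)` and `I(w,x)`
intersect. -/
def PaschIn (V : Set (Λ → Bool)) : Prop :=
  ∀ u v w x y : V, x ∈ intervalIn V u v → y ∈ intervalIn V u w →
    (intervalIn V v y ∩ intervalIn V w x).Nonempty

namespace Stmt13Aux

open SimpleGraph

variable {Λ : Type*} {V : Set (Λ → Bool)}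

/-- The set of coordinates where two vertices differ. -/
def df (x y : V) : Set Λ := {f | (x : Λ → Bool) f ≠ (y : Λ → Bool) f}

lemma df_comm (x y : V) : df x y = df y x := by
  ext g; exact ne_comm

lemma df_triangle (x y z : V) :
    df x z = (df x y ∪ df y z) \ (df x y ∩ df y z) := by
  ext g
  simp only [df, Set.mem_setOf_eq, Set.mem_diff, Set.mem_union, Set.mem_inter_iff]
  cases hx : (x : Λ → Bool) g <;> cases hy : (y : Λ → Bool) g <;>
    cases hz : (z : Λ → Bool) g <;> simp

section WithHV

variable (hV : IsPartialCube V)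
include hV

lemma dist_eq (x y : V) : (pcGraph V).dist x y = (df x y).ncard := hV.2 x y

lemma reach (x y : V) : (pcGraph V).Reachable x y := hV.1.preconnected x y

lemma df_finite (x y : V) : (df x y).Finite := by
  by_contra h
  have h0 : (df x y).ncard = 0 := Set.Infinite.ncard h
  have hxy : x = y := by
    have := (reach hV x y).dist_eq_zero_iff.mp (by rw [dist_eq hV, h0])
    exact this
  subst hxy
  apply h
  have : df x x = (∅ : Set Λ) := by ext g; simp [df]
  rw [this]; exact Set.finite_empty

lemma dist_pos {x y : V} (h : x ≠ y) : 1 ≤ (pcGraph V).dist x y :=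
  (reach hV x y).pos_dist_of_ne h

/-- Interval (metric betweenness) is coordinatewise: the two difference sets
are disjoint. -/
lemma interval_iff (x z y : V) :
    (pcGraph V).dist x z + (pcGraph V).dist z y = (pcGraph V).dist x y ↔
      df x z ∩ df z y = ∅ := by
  have hA : (df x z).Finite := df_finite hV x z
  have hB : (df z y).Finite := df_finite hV z y
  have htri : df x y = (df x z ∪ df z y) \ (df x z ∩ df z y) := df_triangle x z y
  constructor
  · intro h
    rw [dist_eq hV, dist_eq hV, dist_eq hV, htri] at h
    have h1 : ((df x z ∪ df z y) \ (df x z ∩ df z y)).ncard + (df x z ∩ df z y).ncard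
        = (df x z ∪ df z y).ncard := by
      rw [← Set.ncard_union_eq (Set.disjoint_sdiff_left)
        ((hA.union hB).diff) ((hA.inter_of_left _))]
      rw [Set.diff_union_of_subset (Set.inter_subset_left.trans Set.subset_union_left)]
    have h2 : (df x z ∪ df z y).ncard + (df x z ∩ df z y).ncard
        = (df x z).ncard + (df z y).ncard :=
      Set.ncard_union_add_ncard_inter _ _ hA hB
    have h3 : (df x z ∩ df z y).ncard = 0 := by omega
    exact Set.ncard_eq_zero (hA.inter_of_left _) |>.mp h3
  · intro h
    rw [dist_eq hV, dist_eq hV, dist_eq hV, htri, h, Set.diff_empty]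
    exact (Set.ncard_union_eq (Set.disjoint_iff_inter_eq_empty.mpr h) hA hB).symm

lemma adj_df {x y : V} (h : (pcGraph V).Adj x y) : ∃ f, df x y = {f} := by
  have h' : (Qcube Λ).Adj (x : Λ → Bool) (y : Λ → Bool) := h
  obtain ⟨f, hf, hall⟩ := h'
  refine ⟨f, ?_⟩
  ext g
  simp only [df, Set.mem_setOf_eq, Set.mem_singleton_iff]
  constructor
  · intro hg
    by_contra hne
    exact hg (hall g hne)
  · rintro rfl; exact hf

end WithHV

/-- A symmetric-difference-with-a-singleton cardinality dichotomy. -/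
lemma stepSD {A B : Set Λ} {y : Λ} (hB : B = (A ∪ {y}) \ (A ∩ {y})) (hA : A.Finite) :
    (y ∈ A ∧ B.ncard + 1 = A.ncard) ∨ (y ∉ A ∧ B.ncard = A.ncard + 1 ∧ B = A ∪ {y}) := by
  by_cases hy : y ∈ A
  · left
    refine ⟨hy, ?_⟩
    have h1 : A ∪ {y} = A := Set.union_eq_self_of_subset_right (by simpa using hy)
    have h2 : A ∩ {y} = {y} := Set.inter_eq_self_of_subset_right (by simpa using hy)
    rw [hB, h1, h2]
    have h3 : A = insert y (A \ {y}) := by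
      rw [Set.insert_diff_singleton, Set.insert_eq_self.mpr hy]
    conv_rhs => rw [h3]
    rw [Set.ncard_insert_of_notMem (by simp) (hA.diff)]
  · right
    have h2 : A ∩ {y} = ∅ := by
      ext g; simp only [Set.mem_inter_iff, Set.mem_singleton_iff, Set.mem_empty_iff_false,
        iff_false, not_and]
      rintro hg rfl; exact hy hg
    have hBeq : B = A ∪ {y} := by rw [hB, h2, Set.diff_empty]
    refine ⟨hy, ?_, hBeq⟩
    rw [hBeq, Set.union_singleton, Set.ncard_insert_of_notMem hy hA]

end Stmt13Aux

open SimpleGraph Stmt13Aux in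
/-- In a partial cube satisfying the `S₄` separation property (Pasch axiom),
the convex hull of every isometric cycle is gated. -/
theorem stmt13 (V : Set (Λ → Bool)) (hV : IsPartialCube V) (hS4 : PaschIn V)
    (n : ℕ) (hn : 3 ≤ n) (c : ZMod n → V) (hinj : Function.Injective c)
    (hadj : ∀ i, (pcGraph V).Adj (c i) (c (i + 1)))
    (hiso : ∀ i j, (pcGraph V).dist (c i) (c j) = (cycGraph n).dist i j) :
    GatedIn V (convexHullIn V {x | ∃ i, ↑(c i) = x}) := by
  classical
  haveI : NeZero n := ⟨by omega⟩
  -- edge classes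
  have hadj' : ∀ i, ∃ f, df (c i) (c (i + 1)) = {f} := fun i => adj_df hV (hadj i)
  choose e he using hadj'
  set F : Set Λ := Set.range e with hF
  -- Walks in the cycle graph
  have hone : (1 : ZMod n) ≠ 0 := by
    haveI : Fact (1 < n) := ⟨by omega⟩
    exact one_ne_zero
  have adjc : ∀ i : ZMod n, (cycGraph n).Adj i (i + 1) := by
    intro i
    refine ⟨fun h => hone (left_eq_add.mp h), Or.inl rfl⟩
  have walkto : ∀ (i : ZMod n) (t : ℕ),
      ∃ w : (cycGraph n).Walk i (i + (t : ZMod n)), w.length = t := by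
    intro i t
    induction t with
    | zero => exact ⟨SimpleGraph.Walk.nil.copy rfl (by simp), by simp⟩
    | succ t ih =>
      obtain ⟨w, hw⟩ := ih
      refine ⟨(w.concat (adjc (i + (t : ZMod n)))).copy rfl (by push_cast; ring), ?_⟩
      simp [SimpleGraph.Walk.length_concat, hw]
  have reachc : ∀ i j : ZMod n, (cycGraph n).Reachable i j := by
    intro i j
    obtain ⟨w, _⟩ := walkto i ((j - i).val)
    have : i + ((j - i).val : ZMod n) = j := by
      rw [ZMod.natCast_rightInverse (j - i)]; ring
    exact ⟨w.copy rfl this⟩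
  have wcongr : ∀ {i j : ZMod n} (w : (cycGraph n).Walk i j),
      ∃ s : ℤ, ((s : ZMod n) = j - i) ∧ s.natAbs ≤ w.length := by
    intro i j w
    induction w with
    | nil => exact ⟨0, by simp, by simp⟩
    | @cons a b d h p ih =>
      obtain ⟨s, hs1, hs2⟩ := ih
      have h' : a ≠ b ∧ (b = a + 1 ∨ a = b + 1) := h
      have hlen : (SimpleGraph.Walk.cons h p).length = p.length + 1 :=
        SimpleGraph.Walk.length_cons _ _
      rcases h'.2 with hb | hb
      · refine ⟨s + 1, ?_, ?_⟩
        · push_cast [hs1]; rw [hb]; ring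
        · have := Int.natAbs_add_le s 1
          simp only [Int.natAbs_one] at this
          omega
      · refine ⟨s - 1, ?_, ?_⟩
        · push_cast [hs1]; rw [hb]; ring
        · have := Int.natAbs_sub_le s 1
          simp only [Int.natAbs_one] at this
          omega
  -- distance formula in the cycle
  have distc : ∀ (i : ZMod n) (t : ℕ), t ≤ n →
      (cycGraph n).dist i (i + (t : ZMod n)) = min t (n - t) := by
    intro i t ht
    have up1 : (cycGraph n).dist i (i + (t : ZMod n)) ≤ t := by
      obtain ⟨w, hw⟩ := walkto i t
      exact le_trans (SimpleGraph.dist_le w) (le_of_eq hw)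
    have up2 : (cycGraph n).dist i (i + (t : ZMod n)) ≤ n - t := by
      obtain ⟨w, hw⟩ := walkto (i + (t : ZMod n)) (n - t)
      have hcast : (i + (t : ZMod n)) + ((n - t : ℕ) : ZMod n) = i := by
        rw [add_assoc, ← Nat.cast_add, Nat.add_sub_cancel' ht, ZMod.natCast_self, add_zero]
      rw [SimpleGraph.dist_comm]
      exact le_trans (SimpleGraph.dist_le (w.copy rfl hcast)) (by simpa using le_of_eq hw)
    have lo : min t (n - t) ≤ (cycGraph n).dist i (i + (t : ZMod n)) := by
      obtain ⟨w, hw⟩ := (reachc i (i + (t : ZMod n))).exists_walk_length_eq_dist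
      obtain ⟨s, hs1, hs2⟩ := wcongr w
      rw [hw] at hs2
      have hs1' : (s : ZMod n) = ((t : ℤ) : ZMod n) := by
        rw [hs1]; push_cast; ring
      have hdvd : (n : ℤ) ∣ (t : ℤ) - s :=
        Int.ModEq.dvd ((ZMod.intCast_eq_intCast_iff _ _ _).mp hs1')
      obtain ⟨q, hq⟩ := hdvd
      have hq3 : q = 0 ∨ 1 ≤ q ∨ q ≤ -1 := by omega
      have hnq : 1 ≤ q → (n : ℤ) ≤ n * q := fun h =>
        le_mul_of_one_le_right (by positivity) h
      have hnq' : q ≤ -1 → (n : ℤ) * q ≤ -(n : ℤ) := fun h => by nlinarith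
      rcases Int.natAbs_eq s with habs | habs <;>
        rcases hq3 with h3 | h3 | h3 <;>
        first
          | (simp only [h3, mul_zero] at hq; omega)
          | (have := hnq h3; omega)
          | (have := hnq' h3; omega)
    omega
  have hciso : ∀ (i : ZMod n) (t : ℕ), t ≤ n →
      (pcGraph V).dist (c i) (c (i + (t : ZMod n))) = min t (n - t) := by
    intro i t ht; rw [hiso]; exact distc i t ht
  -- C4: difference sets along arcs
  have C4 : ∀ (t : ℕ), 2 * t ≤ n → ∀ (i : ZMod n),
      df (c i) (c (i + (t : ZMod n)))
        = ↑((Finset.range t).image (fun s : ℕ => e (i + (s : ZMod n)))) ∧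
      ((Finset.range t).image (fun s : ℕ => e (i + (s : ZMod n)))).card = t := by
    intro t
    induction t with
    | zero =>
      intro _ i
      constructor
      · have h0 : i + ((0 : ℕ) : ZMod n) = i := by simp
        rw [h0]
        ext g; simp [df]
      · simp
    | succ t ih =>
      intro h2 i
      obtain ⟨hset, hcard⟩ := ih (by omega) i
      have hdist : (pcGraph V).dist (c i) (c (i + ((t+1 : ℕ) : ZMod n))) = t + 1 := by
        rw [hciso i (t+1) (by omega)]; omega
      have hn1 : (df (c i) (c (i + ((t+1 : ℕ) : ZMod n)))).ncard = t + 1 := by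
        rw [← dist_eq hV, hdist]
      have hmid : df (c (i + (t : ZMod n))) (c (i + ((t+1 : ℕ) : ZMod n))) = {e (i + (t : ZMod n))} := by
        have hcast : i + ((t+1 : ℕ) : ZMod n) = (i + (t : ZMod n)) + 1 := by push_cast; ring
        rw [hcast]; exact he _
      have htri := df_triangle (c i) (c (i + (t : ZMod n))) (c (i + ((t+1 : ℕ) : ZMod n)))
      rw [hmid, hset] at htri
      have hAfin : (↑((Finset.range t).image (fun s : ℕ => e (i + (s : ZMod n)))) : Set Λ).Finite :=
        Finset.finite_toSet _
      rcases stepSD htri hAfin with ⟨hmem, hc⟩ | ⟨hmem, hc, hBeq⟩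
      · exfalso
        rw [hn1, Set.ncard_coe_finset, hcard] at hc
        omega
      · have himg : (Finset.range (t+1)).image (fun s : ℕ => e (i + (s : ZMod n)))
            = insert (e (i + (t : ZMod n))) ((Finset.range t).image (fun s : ℕ => e (i + (s : ZMod n)))) := by
          rw [Finset.range_add_one, Finset.image_insert]
        have hmem' : e (i + (t : ZMod n)) ∉ (Finset.range t).image (fun s : ℕ => e (i + (s : ZMod n))) := by
          simpa using hmem
        constructor
        · rw [hBeq, himg, Finset.coe_insert, Set.union_singleton]
        · rw [himg, Finset.card_insert_of_notMem hmem', hcard]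
  -- n must be even
  rcases Nat.even_or_odd n with heven | hodd
  swap
  · exfalso
    obtain ⟨k, hk⟩ := hodd
    have hk1 : 1 ≤ k := by omega
    obtain ⟨hset, hcard⟩ := C4 k (by omega) 0
    have hdist : (pcGraph V).dist (c 0) (c (0 + ((k+1 : ℕ) : ZMod n))) = k := by
      rw [hciso 0 (k+1) (by omega)]; omega
    have hn1 : (df (c 0) (c (0 + ((k+1 : ℕ) : ZMod n)))).ncard = k := by
      rw [← dist_eq hV, hdist]
    have hmid : df (c (0 + (k : ZMod n))) (c (0 + ((k+1 : ℕ) : ZMod n))) = {e (0 + (k : ZMod n))} := by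
      have hcast : (0 : ZMod n) + ((k+1 : ℕ) : ZMod n) = (0 + (k : ZMod n)) + 1 := by push_cast; ring
      rw [hcast]; exact he _
    have htri := df_triangle (c 0) (c (0 + (k : ZMod n))) (c (0 + ((k+1 : ℕ) : ZMod n)))
    rw [hmid, hset] at htri
    rcases stepSD htri (Finset.finite_toSet _) with ⟨_, hc⟩ | ⟨_, hc, _⟩ <;>
      rw [hn1, Set.ncard_coe_finset, hcard] at hc <;> omega
  obtain ⟨k, hk⟩ := heven
  have hkn : n = 2 * k := by omega
  have hk2 : 2 ≤ k := by omega
  -- C6 : e is k-periodic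
  have C6 : ∀ u : ZMod n, e (u + (k : ZMod n)) = e u := by
    intro u
    obtain ⟨hsetu, hcardu⟩ := C4 k (by omega) u
    obtain ⟨hset1, hcard1⟩ := C4 k (by omega) (u + 1)
    have hdist : (pcGraph V).dist (c u) (c (u + ((k+1 : ℕ) : ZMod n))) = k - 1 := by
      rw [hciso u (k+1) (by omega)]; omega
    have hn1 : (df (c u) (c (u + ((k+1 : ℕ) : ZMod n)))).ncard = k - 1 := by
      rw [← dist_eq hV, hdist]
    have hmid : df (c (u + (k : ZMod n))) (c (u + ((k+1 : ℕ) : ZMod n))) = {e (u + (k : ZMod n))} := by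
      have hcast : u + ((k+1 : ℕ) : ZMod n) = (u + (k : ZMod n)) + 1 := by push_cast; ring
      rw [hcast]; exact he _
    have htri := df_triangle (c u) (c (u + (k : ZMod n))) (c (u + ((k+1 : ℕ) : ZMod n)))
    rw [hmid, hsetu] at htri
    rcases stepSD htri (Finset.finite_toSet _) with ⟨hmem, _⟩ | ⟨_, hc, _⟩
    · obtain ⟨s₀, hs₀r, hs₀e⟩ := Finset.mem_image.mp hmem
      have hs₀k : s₀ < k := Finset.mem_range.mp hs₀r
      rcases Nat.eq_zero_or_pos s₀ with h0 | hpos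
      · subst h0
        simpa using hs₀e.symm
      · exfalso
        have hinjOn : Set.InjOn (fun s : ℕ => e ((u+1) + (s : ZMod n))) ↑(Finset.range k) :=
          Finset.card_image_iff.mp (by rw [hcard1, Finset.card_range])
        have e1 : (u+1) + ((s₀ - 1 : ℕ) : ZMod n) = u + (s₀ : ZMod n) := by
          have : ((s₀ - 1 : ℕ) : ZMod n) = (s₀ : ZMod n) - 1 := by
            have : s₀ - 1 + 1 = s₀ := by omega
            rw [← this]; push_cast; ring
          rw [this]; ring
        have e2 : (u+1) + ((k - 1 : ℕ) : ZMod n) = u + (k : ZMod n) := by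
          have : ((k - 1 : ℕ) : ZMod n) = (k : ZMod n) - 1 := by
            have : k - 1 + 1 = k := by omega
            rw [← this]; push_cast; ring
          rw [this]; ring
        have h1 : (fun s : ℕ => e ((u+1) + (s : ZMod n))) (s₀ - 1)
            = (fun s : ℕ => e ((u+1) + (s : ZMod n))) (k - 1) := by
          simp only
          rw [e1, e2, hs₀e]
        have := hinjOn (by simp; omega) (by simp; omega) h1
        omega
    · exfalso
      rw [hn1, Set.ncard_coe_finset, hcardu] at hc
      omega
  -- antipodality: df (c j) (c (j+k)) = F
  have antip : ∀ j : ZMod n, df (c j) (c (j + (k : ZMod n))) = F := by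
    intro j
    obtain ⟨hset, _⟩ := C4 k (by omega) j
    rw [hset]
    ext g
    simp only [Finset.coe_image, Finset.coe_range, Set.mem_image, Set.mem_Iio, hF,
      Set.mem_range]
    constructor
    · rintro ⟨s, _, rfl⟩; exact ⟨j + (s : ZMod n), rfl⟩
    · rintro ⟨u, rfl⟩
      set t := (u - j).val with htdef
      have hu : u = j + (t : ZMod n) := by
        rw [htdef, ZMod.natCast_rightInverse (u - j)]; ring
      have htn : t < n := ZMod.val_lt (u - j)
      by_cases hlt : t < k
      · exact ⟨t, hlt, by rw [← hu]⟩
      · refine ⟨t - k, by omega, ?_⟩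
        have hc2 : j + ((t - k : ℕ) : ZMod n) + (k : ZMod n) = j + (t : ZMod n) := by
          rw [add_assoc, ← Nat.cast_add]
          congr 2
          omega
        calc e (j + ((t - k : ℕ) : ZMod n)) = e (j + ((t - k : ℕ) : ZMod n) + (k : ZMod n)) :=
              (C6 _).symm
          _ = e u := by rw [hc2, ← hu]
  -- off-F constancy along the cycle
  have offF : ∀ (i : ZMod n) (g : Λ), g ∉ F → (c i : Λ → Bool) g = (c 0 : Λ → Bool) g := by
    intro i g hg
    have key : ∀ t : ℕ, (c ((t : ℕ) : ZMod n) : Λ → Bool) g = (c 0 : Λ → Bool) g := by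
      intro t
      induction t with
      | zero => norm_num
      | succ t ih =>
        have hstep : (c ((t : ℕ) : ZMod n) : Λ → Bool) g = (c (((t : ℕ) : ZMod n) + 1) : Λ → Bool) g := by
          by_contra hne
          have : g ∈ df (c ((t : ℕ) : ZMod n)) (c (((t : ℕ) : ZMod n) + 1)) := hne
          rw [he] at this
          exact hg ⟨_, this.symm⟩
        have hcast : ((t + 1 : ℕ) : ZMod n) = ((t : ℕ) : ZMod n) + 1 := by push_cast; ring
        rw [hcast, ← hstep, ih]
    have : i = ((i.val : ℕ) : ZMod n) := (ZMod.natCast_rightInverse i).symm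
    rw [this]; exact key i.val
  -- properties of the convex hull K
  set A : Set (Λ → Bool) := {x | ∃ i, ↑(c i) = x} with hA
  set K : Set (Λ → Bool) := convexHullIn V A with hK
  have hVfam : ConvexIn V V ∧ A ⊆ V := by
    refine ⟨⟨subset_rfl, fun u v w _ _ _ => w.2⟩, ?_⟩
    rintro x ⟨i, rfl⟩; exact (c i).2
  have hKV : K ⊆ V := Set.sInter_subset_of_mem hVfam
  have hCK : ∀ i, ↑(c i) ∈ K := fun i => Set.mem_sInter.mpr (fun W hW => hW.2 ⟨i, rfl⟩)
  have hKconv : ∀ u v z : V, ↑u ∈ K → ↑v ∈ K →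
      (pcGraph V).dist u z + (pcGraph V).dist z v = (pcGraph V).dist u v → ↑z ∈ K := by
    intro u v z hu hv hz
    exact Set.mem_sInter.mpr fun W hW =>
      hW.1.2 u v z (Set.mem_sInter.mp hu W hW) (Set.mem_sInter.mp hv W hW) hz
  have hKoffF : ∀ g : Λ, g ∉ F → ∀ y : V, (y : Λ → Bool) ∈ K →
      (y : Λ → Bool) g = (c 0 : Λ → Bool) g := by
    intro g hg y hy
    have hsub : K ⊆ {x ∈ V | x g = (c 0 : Λ → Bool) g} := by
      apply Set.sInter_subset_of_mem
      constructor
      · constructor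
        · exact Set.sep_subset _ _
        · intro u v w hu hv hw
          refine ⟨w.2, ?_⟩
          by_contra hne
          have hdisj := (interval_iff hV u w v).mp hw
          have h1 : g ∈ df u w := by
            show (u : Λ → Bool) g ≠ (w : Λ → Bool) g
            rw [hu.2]; exact fun hh => hne hh.symm
          have h2 : g ∈ df w v := by
            show (w : Λ → Bool) g ≠ (v : Λ → Bool) g
            rw [hv.2]; exact hne
          exact (Set.eq_empty_iff_forall_notMem.mp hdisj g) ⟨h1, h2⟩
      · rintro x ⟨i, rfl⟩
        exact ⟨(c i).2, offF i g hg⟩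
    exact (hsub hy).2
  -- Bool helpers
  have bool3 : ∀ a b cc : Bool, a ≠ b → b ≠ cc → a = cc := by decide
  have bool2 : ∀ u v w : Bool, u ≠ v → u ≠ w → v = w := by decide
  -- the main goal
  constructor
  · exact hKV
  intro x
  -- choose a closest point p of K to x
  set S : Set ℕ := {m | ∃ y : V, (y : Λ → Bool) ∈ K ∧ (pcGraph V).dist x y = m} with hS
  have hSne : S.Nonempty := ⟨_, c 0, hCK 0, rfl⟩
  obtain ⟨p, hpK, hpd⟩ := Nat.sInf_mem hSne
  have hmin : ∀ y : V, (y : Λ → Bool) ∈ K → (pcGraph V).dist x p ≤ (pcGraph V).dist x y := by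
    intro y hy; rw [hpd]; exact Nat.sInf_le ⟨y, hy, rfl⟩
  by_cases hFcase : ∃ f ∈ F, f ∈ df x p
  · -- impossible: Pasch produces a closer point of K
    exfalso
    obtain ⟨f, hfF, hfd⟩ := hFcase
    obtain ⟨a, rfl⟩ := hfF
    set b : Bool := (x : Λ → Bool) (e a) with hb
    have hstep : df (c a) (c (a + 1)) = {e a} := he a
    have hne0 : (c a : Λ → Bool) (e a) ≠ (c (a + 1) : Λ → Bool) (e a) := by
      have : e a ∈ df (c a) (c (a + 1)) := by rw [hstep]; rfl
      exact this
    -- orientation: j on the far side, m on the side of x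
    obtain ⟨j, m, hjm, hmb, hjb⟩ : ∃ j m : ZMod n, df (c j) (c m) = {e a} ∧
        (c m : Λ → Bool) (e a) = b ∧ (c j : Λ → Bool) (e a) ≠ b := by
      by_cases hcb : (c (a + 1) : Λ → Bool) (e a) = b
      · exact ⟨a, a + 1, hstep, hcb, fun hh => hne0 (hh.trans hcb.symm)⟩
      · refine ⟨a + 1, a, by rw [df_comm, hstep], ?_, hcb⟩
        cases hca : (c a : Λ → Bool) (e a) with
        | false => cases hcb1 : (c (a+1) : Λ → Bool) (e a) with
          | false => exact absurd (hca.trans hcb1.symm) hne0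
          | true =>
            cases hbv : b with
            | false => rfl
            | true => exact absurd (hcb1.trans hbv.symm) hcb
        | true => cases hcb1 : (c (a+1) : Λ → Bool) (e a) with
          | true => exact absurd (hca.trans hcb1.symm) hne0
          | false =>
            cases hbv : b with
            | true => rfl
            | false => exact absurd (hcb1.trans hbv.symm) hcb
    have hpb : (p : Λ → Bool) (e a) ≠ b := fun hh => hfd (hh.trans hb).symm
    have hvb : (c (j + (k : ZMod n)) : Λ → Bool) (e a) = b := by
      have hmemF : e a ∈ df (c j) (c (j + (k : ZMod n))) := by
        rw [antip j]; exact ⟨a, rfl⟩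
      exact bool2 _ _ _ hmemF hjb
    have P1 : p ∈ intervalIn V (c j) (c (j + (k : ZMod n))) := by
      show (pcGraph V).dist (c j) p + (pcGraph V).dist p (c (j + (k : ZMod n)))
          = (pcGraph V).dist (c j) (c (j + (k : ZMod n)))
      apply (interval_iff hV _ _ _).mpr
      rw [Set.eq_empty_iff_forall_notMem]
      rintro g ⟨h1, h2⟩
      by_cases hgF : g ∈ F
      · have hne2 : g ∈ df (c j) (c (j + (k : ZMod n))) := by rw [antip j]; exact hgF
        exact hne2 (bool3 _ _ _ h1 h2)
      · have e1 := hKoffF g hgF p hpK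
        have e2 := offF j g hgF
        exact h1 (e2.trans e1.symm)
    have P2 : (c m) ∈ intervalIn V (c j) x := by
      show (pcGraph V).dist (c j) (c m) + (pcGraph V).dist (c m) x
          = (pcGraph V).dist (c j) x
      apply (interval_iff hV _ _ _).mpr
      rw [Set.eq_empty_iff_forall_notMem]
      rintro g ⟨h1, h2⟩
      rw [hjm] at h1
      rcases h1 with rfl
      exact h2 (hmb.trans hb)
    obtain ⟨z, hz1, hz2⟩ := hS4 (c j) (c (j + (k : ZMod n))) x p (c m) P1 P2
    have hz1' : (pcGraph V).dist (c (j + (k : ZMod n))) z + (pcGraph V).dist z (c m)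
        = (pcGraph V).dist (c (j + (k : ZMod n))) (c m) := hz1
    have hz2' : (pcGraph V).dist x z + (pcGraph V).dist z p = (pcGraph V).dist x p := hz2
    have hzK : ↑z ∈ K := hKconv _ _ z (hCK (j + (k : ZMod n))) (hCK m) hz1'
    have hzdisj := (interval_iff hV _ _ _).mp hz1'
    have hzb : (z : Λ → Bool) (e a) = b := by
      by_contra hne'
      refine (Set.eq_empty_iff_forall_notMem.mp hzdisj (e a)) ⟨?_, ?_⟩
      · show (c (j + (k : ZMod n)) : Λ → Bool) (e a) ≠ (z : Λ → Bool) (e a)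
        rw [hvb]; exact fun hh => hne' hh.symm
      · show (z : Λ → Bool) (e a) ≠ (c m : Λ → Bool) (e a)
        rw [hmb]; exact hne'
    have hzp : z ≠ p := by
      intro hzp; rw [hzp] at hzb; exact hpb hzb
    have hd1 := dist_pos hV hzp
    have hle := hmin z hzK
    omega
  · -- p is the gate
    push_neg at hFcase
    refine ⟨p, hpK, ?_⟩
    intro y hy
    have hdisj : df x p ∩ df p y = ∅ := by
      rw [Set.eq_empty_iff_forall_notMem]
      rintro g ⟨h1, h2⟩
      have hgF : g ∉ F := fun hh => hFcase g hh h1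
      have e1 := hKoffF g hgF p hpK
      have e2 := hKoffF g hgF y hy
      exact h2 (e1.trans e2.symm)
    exact ((interval_iff hV x p y).mpr hdisj).symm
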